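/- For any reals κ and uniformly random independent μ₁, μ₂ ∈ [0, π/2], the expectation E|sin(μ₁ + μ₂ + κ)| = (4/π²) ∫₀^{π/2} ∫₀^{π/2} |sin(μ₁ + μ₂ + κ)| dμ₁ dμ₂ ≥ 2/5. -/

import Mathlib

open intervalIntegral

open Real MeasureTheory

lemma polyineq (x : ℝ) (h0 : 0 ≤ x) (h1 : x ≤ 1) :
    (120/11)*x - (1120/33)*x^3 + (3584/55)*x^5 - (4608/77)*x^7 + (2048/99)*x^9 ≤ 3 := by
  have hy : (0:ℝ) ≤ 1 - x := by linarith
  have H0 : (0:ℝ) ≤ x^0*(1-x)^23 := mul_nonneg (pow_nonneg h0 _) (pow_nonneg hy _)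
  have H1 : (0:ℝ) ≤ x^1*(1-x)^22 := mul_nonneg (pow_nonneg h0 _) (pow_nonneg hy _)
  have H2 : (0:ℝ) ≤ x^2*(1-x)^21 := mul_nonneg (pow_nonneg h0 _) (pow_nonneg hy _)
  have H3 : (0:ℝ) ≤ x^3*(1-x)^20 := mul_nonneg (pow_nonneg h0 _) (pow_nonneg hy _)
  have H4 : (0:ℝ) ≤ x^4*(1-x)^19 := mul_nonneg (pow_nonneg h0 _) (pow_nonneg hy _)
  have H5 : (0:ℝ) ≤ x^5*(1-x)^18 := mul_nonneg (pow_nonneg h0 _) (pow_nonneg hy _)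
  have H6 : (0:ℝ) ≤ x^6*(1-x)^17 := mul_nonneg (pow_nonneg h0 _) (pow_nonneg hy _)
  have H7 : (0:ℝ) ≤ x^7*(1-x)^16 := mul_nonneg (pow_nonneg h0 _) (pow_nonneg hy _)
  have H8 : (0:ℝ) ≤ x^8*(1-x)^15 := mul_nonneg (pow_nonneg h0 _) (pow_nonneg hy _)
  have H9 : (0:ℝ) ≤ x^9*(1-x)^14 := mul_nonneg (pow_nonneg h0 _) (pow_nonneg hy _)
  have H10 : (0:ℝ) ≤ x^10*(1-x)^13 := mul_nonneg (pow_nonneg h0 _) (pow_nonneg hy _)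
  have H11 : (0:ℝ) ≤ x^11*(1-x)^12 := mul_nonneg (pow_nonneg h0 _) (pow_nonneg hy _)
  have H12 : (0:ℝ) ≤ x^12*(1-x)^11 := mul_nonneg (pow_nonneg h0 _) (pow_nonneg hy _)
  have H13 : (0:ℝ) ≤ x^13*(1-x)^10 := mul_nonneg (pow_nonneg h0 _) (pow_nonneg hy _)
  have H14 : (0:ℝ) ≤ x^14*(1-x)^9 := mul_nonneg (pow_nonneg h0 _) (pow_nonneg hy _)
  have H15 : (0:ℝ) ≤ x^15*(1-x)^8 := mul_nonneg (pow_nonneg h0 _) (pow_nonneg hy _)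
  have H16 : (0:ℝ) ≤ x^16*(1-x)^7 := mul_nonneg (pow_nonneg h0 _) (pow_nonneg hy _)
  have H17 : (0:ℝ) ≤ x^17*(1-x)^6 := mul_nonneg (pow_nonneg h0 _) (pow_nonneg hy _)
  have H18 : (0:ℝ) ≤ x^18*(1-x)^5 := mul_nonneg (pow_nonneg h0 _) (pow_nonneg hy _)
  have H19 : (0:ℝ) ≤ x^19*(1-x)^4 := mul_nonneg (pow_nonneg h0 _) (pow_nonneg hy _)
  have H20 : (0:ℝ) ≤ x^20*(1-x)^3 := mul_nonneg (pow_nonneg h0 _) (pow_nonneg hy _)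
  have H21 : (0:ℝ) ≤ x^21*(1-x)^2 := mul_nonneg (pow_nonneg h0 _) (pow_nonneg hy _)
  have H22 : (0:ℝ) ≤ x^22*(1-x)^1 := mul_nonneg (pow_nonneg h0 _) (pow_nonneg hy _)
  have H23 : (0:ℝ) ≤ x^23*(1-x)^0 := mul_nonneg (pow_nonneg h0 _) (pow_nonneg hy _)
  have key : 3 - ((120/11)*x - (1120/33)*x^3 + (3584/55)*x^5 - (4608/77)*x^7 + (2048/99)*x^9) =
      (3/1)*(x^0*(1-x)^23) + (639/11)*(x^1*(1-x)^22) + (519/1)*(x^2*(1-x)^21) + (93289/33)*(x^3*(1-x)^20) + (344645/33)*(x^4*(1-x)^19) + (4542503/165)*(x^5*(1-x)^18) + (2919343/55)*(x^6*(1-x)^17) + (2661301/35)*(x^7*(1-x)^16) + (2955482/35)*(x^8*(1-x)^15) + (5444510/63)*(x^9*(1-x)^14) + (55282042/495)*(x^10*(1-x)^13) + (86424806/495)*(x^11*(1-x)^12) + (119381366/495)*(x^12*(1-x)^11) + (11496542/45)*(x^13*(1-x)^10) + (138999610/693)*(x^14*(1-x)^9) + (132280618/1155)*(x^15*(1-x)^8)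 + (52927949/1155)*(x^16*(1-x)^7) + (1944277/165)*(x^17*(1-x)^6) + (68647/45)*(x^18*(1-x)^5) + (85/9)*(x^19*(1-x)^4) + (589/45)*(x^20*(1-x)^3) + (56279/3465)*(x^21*(1-x)^2) + (9469/3465)*(x^22*(1-x)^1) + (83/3465)*(x^23*(1-x)^0) := by ring
  linarith [H0, H1, H2, H3, H4, H5, H6, H7, H8, H9, H10, H11, H12, H13, H14, H15, H16, H17, H18, H19, H20, H21, H22, H23]

lemma pointwise (t : ℝ) :
    20/11 - (4/3)*Real.cos (2*t) - (4/15)*Real.cos (4*t) - (4/35)*Real.cos (6*t)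
      - (4/63)*Real.cos (8*t) - (4/99)*Real.cos (10*t) ≤ π * |Real.sin t| := by
  have hsc := Real.sin_sq_add_cos_sq t
  have h2 : Real.cos (2*t) = 1 - 2 * Real.sin t ^ 2 := by
    rw [Real.cos_two_mul]; nlinarith [hsc]
  have h4 : Real.cos (4*t) = 2 * Real.cos (2*t)^2 - 1 := by
    rw [show (4:ℝ)*t = 2*(2*t) by ring, Real.cos_two_mul]
  have h6 : Real.cos (6*t) = 4 * Real.cos (2*t)^3 - 3 * Real.cos (2*t) := by
    rw [show (6:ℝ)*t = 3*(2*t) by ring, Real.cos_three_mul]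
  have h8 : Real.cos (8*t) = 2 * Real.cos (4*t)^2 - 1 := by
    rw [show (8:ℝ)*t = 2*(4*t) by ring, Real.cos_two_mul]
  have h10 : Real.cos (10*t) = 2 * Real.cos (6*t) * Real.cos (4*t) - Real.cos (2*t) := by
    have ha := Real.cos_add (6*t) (4*t)
    have hb := Real.cos_sub (6*t) (4*t)
    rw [show (6:ℝ)*t + 4*t = 10*t by ring] at ha
    rw [show (6:ℝ)*t - 4*t = 2*t by ring] at hb
    linarith
  set x := |Real.sin t| with hxdef
  have hx0 : 0 ≤ x := abs_nonneg _
  have hx1 : x ≤ 1 := abs_le.mpr ⟨Real.neg_one_le_sin t, Real.sin_le_one t⟩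
  have hxs : Real.sin t ^ 2 = x ^ 2 := (sq_abs _).symm
  have hr := polyineq x hx0 hx1
  have h3x : 3 * x ≤ π * x :=
    mul_le_mul_of_nonneg_right (le_of_lt (by linarith [Real.pi_gt_three])) hx0
  rw [h10, h8, h6, h4, h2, hxs]
  nlinarith [hr, h3x, hx0, mul_le_mul_of_nonneg_left hr hx0]

lemma int_cos_lin (c a : ℝ) (hc : c ≠ 0) :
    ∫ y in (0:ℝ)..(π/2), Real.cos (c*y + a) = (Real.sin (c*(π/2) + a) - Real.sin a) / c := by
  rw [intervalIntegral.integral_comp_mul_add Real.cos hc a, integral_cos]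
  rw [smul_eq_mul]
  field_simp
  simp

lemma int_sin_lin (c a : ℝ) (hc : c ≠ 0) :
    ∫ y in (0:ℝ)..(π/2), Real.sin (c*y + a) = (Real.cos a - Real.cos (c*(π/2) + a)) / c := by
  rw [intervalIntegral.integral_comp_mul_add Real.sin hc a, integral_sin]
  rw [smul_eq_mul]
  field_simp
  simp

lemma cos_int_integrable (c a x y : ℝ) :
    IntervalIntegrable (fun u : ℝ => Real.cos (c*u + a)) volume x y :=
  (Real.continuous_cos.comp (by fun_prop)).intervalIntegrable x y

lemma inner_int (u : ℝ) :
    ∫ y in (0:ℝ)..(π/2),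
      (20/11 - (4/3)*Real.cos (2*y + 2*u) - (4/15)*Real.cos (4*y + 4*u)
        - (4/35)*Real.cos (6*y + 6*u) - (4/63)*Real.cos (8*y + 8*u)
        - (4/99)*Real.cos (10*y + 10*u))
    = 10*π/11 + (4/3)*Real.sin (2*u) + (4/105)*Real.sin (6*u) + (4/495)*Real.sin (10*u) := by
  have i2 := cos_int_integrable 2 (2*u) 0 (π/2)
  have i4 := cos_int_integrable 4 (4*u) 0 (π/2)
  have i6 := cos_int_integrable 6 (6*u) 0 (π/2)
  have i8 := cos_int_integrable 8 (8*u) 0 (π/2)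
  have i10 := cos_int_integrable 10 (10*u) 0 (π/2)
  rw [intervalIntegral.integral_sub (((((_root_.intervalIntegrable_const).sub (i2.const_mul _)).sub
        (i4.const_mul _)).sub (i6.const_mul _)).sub (i8.const_mul _)) (i10.const_mul _),
      intervalIntegral.integral_sub ((((_root_.intervalIntegrable_const).sub (i2.const_mul _)).sub
        (i4.const_mul _)).sub (i6.const_mul _)) (i8.const_mul _),
      intervalIntegral.integral_sub (((_root_.intervalIntegrable_const).sub (i2.const_mul _)).sub
        (i4.const_mul _)) (i6.const_mul _),
      intervalIntegral.integral_sub ((_root_.intervalIntegrable_const).sub (i2.const_mul _))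
        (i4.const_mul _),
      intervalIntegral.integral_sub (_root_.intervalIntegrable_const) (i2.const_mul _),
      intervalIntegral.integral_const_mul, intervalIntegral.integral_const_mul,
      intervalIntegral.integral_const_mul, intervalIntegral.integral_const_mul,
      intervalIntegral.integral_const_mul, intervalIntegral.integral_const,
      int_cos_lin 2 (2*u) (by norm_num), int_cos_lin 4 (4*u) (by norm_num),
      int_cos_lin 6 (6*u) (by norm_num), int_cos_lin 8 (8*u) (by norm_num),
      int_cos_lin 10 (10*u) (by norm_num)]
  rw [show (2:ℝ)*(π/2) + 2*u = 2*u + π by ring, Real.sin_add_pi,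
      show (4:ℝ)*(π/2) + 4*u = 4*u + 2*π by ring, Real.sin_add_two_pi,
      show (6:ℝ)*(π/2) + 6*u = (6*u + π) + 2*π by ring, Real.sin_add_two_pi, Real.sin_add_pi,
      show (8:ℝ)*(π/2) + 8*u = (8*u + 2*π) + 2*π by ring, Real.sin_add_two_pi,
        Real.sin_add_two_pi,
      show (10:ℝ)*(π/2) + 10*u = ((10*u + π) + 2*π) + 2*π by ring, Real.sin_add_two_pi,
        Real.sin_add_two_pi, Real.sin_add_pi]
  simp only [smul_eq_mul]
  ring

lemma outer_int (κ : ℝ) :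
    ∫ x in (0:ℝ)..(π/2),
      (10*π/11 + (4/3)*Real.sin (2*x + 2*κ) + (4/105)*Real.sin (6*x + 6*κ)
        + (4/495)*Real.sin (10*x + 10*κ))
    = 5*π^2/11 + (4/3)*Real.cos (2*κ) + (4/315)*Real.cos (6*κ) + (4/2475)*Real.cos (10*κ) := by
  have s2 : IntervalIntegrable (fun u : ℝ => Real.sin (2*u + 2*κ)) volume 0 (π/2) :=
    (Real.continuous_sin.comp (by fun_prop)).intervalIntegrable _ _
  have s6 : IntervalIntegrable (fun u : ℝ => Real.sin (6*u + 6*κ)) volume 0 (π/2) :=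
    (Real.continuous_sin.comp (by fun_prop)).intervalIntegrable _ _
  have s10 : IntervalIntegrable (fun u : ℝ => Real.sin (10*u + 10*κ)) volume 0 (π/2) :=
    (Real.continuous_sin.comp (by fun_prop)).intervalIntegrable _ _
  rw [intervalIntegral.integral_add (((_root_.intervalIntegrable_const).add (s2.const_mul _)).add
        (s6.const_mul _)) (s10.const_mul _),
      intervalIntegral.integral_add ((_root_.intervalIntegrable_const).add (s2.const_mul _))
        (s6.const_mul _),
      intervalIntegral.integral_add (_root_.intervalIntegrable_const) (s2.const_mul _),
      intervalIntegral.integral_const_mul, intervalIntegral.integral_const_mul,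
      intervalIntegral.integral_const_mul, intervalIntegral.integral_const,
      int_sin_lin 2 (2*κ) (by norm_num), int_sin_lin 6 (6*κ) (by norm_num),
      int_sin_lin 10 (10*κ) (by norm_num)]
  rw [show (2:ℝ)*(π/2) + 2*κ = 2*κ + π by ring, Real.cos_add_pi,
      show (6:ℝ)*(π/2) + 6*κ = (6*κ + π) + 2*π by ring, Real.cos_add_two_pi, Real.cos_add_pi,
      show (10:ℝ)*(π/2) + 10*κ = ((10*κ + π) + 2*π) + 2*π by ring, Real.cos_add_two_pi,
        Real.cos_add_two_pi, Real.cos_add_pi]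
  simp only [smul_eq_mul]
  ring

/- STATEMENT 13: for any real κ, (4/π²) ∫₀^{π/2} ∫₀^{π/2} |sin(μ₁+μ₂+κ)| dμ₁ dμ₂ ≥ 2/5. -/
theorem stmt13 (κ : ℝ) :
    2 / 5 ≤ (4 / Real.pi ^ 2) *
      ∫ x in (0 : ℝ)..(Real.pi / 2),
        ∫ y in (0 : ℝ)..(Real.pi / 2), |Real.sin (x + y + κ)| := by
  have hπ := Real.pi_pos
  have habs : Continuous (fun u : ℝ => |Real.sin u|) := continuous_abs.comp Real.continuous_sin
  set G : ℝ → ℝ := fun z => ∫ u in (0:ℝ)..z, |Real.sin u| with hGdef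
  have hG : Continuous G :=
    intervalIntegral.continuous_primitive (fun a b => habs.intervalIntegrable a b) 0
  -- inner abs-sin integral in closed form via G
  have hF : ∀ x : ℝ, (∫ y in (0:ℝ)..(π/2), |Real.sin (x + y + κ)|)
      = G (π/2 + (x + κ)) - G (x + κ) := by
    intro x
    have h1 : (∫ y in (0:ℝ)..(π/2), |Real.sin (x + y + κ)|)
        = ∫ y in (0:ℝ)..(π/2), (fun u => |Real.sin u|) (y + (x + κ)) := by
      apply intervalIntegral.integral_congr
      intro y _
      simp only
      ring_nf
    rw [h1, intervalIntegral.integral_comp_add_right (fun u => |Real.sin u|) (x + κ)]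
    rw [zero_add]
    rw [← intervalIntegral.integral_interval_sub_left
      (habs.intervalIntegrable 0 (π/2 + (x + κ))) (habs.intervalIntegrable 0 (x + κ))]
  -- pointwise comparison of inner integrals
  have hmono : ∀ x : ℝ,
      (10*π/11 + (4/3)*Real.sin (2*x + 2*κ) + (4/105)*Real.sin (6*x + 6*κ)
        + (4/495)*Real.sin (10*x + 10*κ))
      ≤ π * (G (π/2 + (x + κ)) - G (x + κ)) := by
    intro x
    have key : (∫ y in (0:ℝ)..(π/2),
        (20/11 - (4/3)*Real.cos (2*y + (2*x + 2*κ)) - (4/15)*Real.cos (4*y + (4*x + 4*κ))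
          - (4/35)*Real.cos (6*y + (6*x + 6*κ)) - (4/63)*Real.cos (8*y + (8*x + 8*κ))
          - (4/99)*Real.cos (10*y + (10*x + 10*κ))))
        ≤ ∫ y in (0:ℝ)..(π/2), π * |Real.sin (x + y + κ)| := by
      apply intervalIntegral.integral_mono_on (by positivity)
      · have : Continuous (fun y : ℝ =>
            20/11 - (4/3)*Real.cos (2*y + (2*x + 2*κ)) - (4/15)*Real.cos (4*y + (4*x + 4*κ))
            - (4/35)*Real.cos (6*y + (6*x + 6*κ)) - (4/63)*Real.cos (8*y + (8*x + 8*κ))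
            - (4/99)*Real.cos (10*y + (10*x + 10*κ))) := by fun_prop
        exact this.intervalIntegrable _ _
      · have hcont : Continuous (fun y : ℝ => π * |Real.sin (x + y + κ)|) :=
          continuous_const.mul
            (habs.comp ((continuous_const.add continuous_id).add continuous_const))
        exact hcont.intervalIntegrable _ _
      · intro y _
        have hpt := pointwise (x + y + κ)
        have e2 : 2*(x + y + κ) = 2*y + (2*x + 2*κ) := by ring
        have e4 : 4*(x + y + κ) = 4*y + (4*x + 4*κ) := by ring
        have e6 : 6*(x + y + κ) = 6*y + (6*x + 6*κ) := by ring
        have e8 : 8*(x + y + κ) = 8*y + (8*x + 8*κ) := by ring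
        have e10 : 10*(x + y + κ) = 10*y + (10*x + 10*κ) := by ring
        rw [e2, e4, e6, e8, e10] at hpt
        exact hpt
    have lhs_eq : (∫ y in (0:ℝ)..(π/2),
        (20/11 - (4/3)*Real.cos (2*y + (2*x + 2*κ)) - (4/15)*Real.cos (4*y + (4*x + 4*κ))
          - (4/35)*Real.cos (6*y + (6*x + 6*κ)) - (4/63)*Real.cos (8*y + (8*x + 8*κ))
          - (4/99)*Real.cos (10*y + (10*x + 10*κ))))
        = 10*π/11 + (4/3)*Real.sin (2*(x+κ)) + (4/105)*Real.sin (6*(x+κ))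
          + (4/495)*Real.sin (10*(x+κ)) := by
      have := inner_int (x + κ)
      rw [← this]
      apply intervalIntegral.integral_congr
      intro y _
      norm_num
      ring_nf
    have rhs_eq : (∫ y in (0:ℝ)..(π/2), π * |Real.sin (x + y + κ)|)
        = π * (G (π/2 + (x + κ)) - G (x + κ)) := by
      rw [intervalIntegral.integral_const_mul, hF x]
    rw [lhs_eq, rhs_eq] at key
    have e2' : 2*(x+κ) = 2*x + 2*κ := by ring
    have e6' : 6*(x+κ) = 6*x + 6*κ := by ring
    have e10' : 10*(x+κ) = 10*x + 10*κ := by ring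
    rw [e2', e6', e10'] at key
    exact key
  -- integrate the comparison over x
  have houter : (∫ x in (0:ℝ)..(π/2),
      (10*π/11 + (4/3)*Real.sin (2*x + 2*κ) + (4/105)*Real.sin (6*x + 6*κ)
        + (4/495)*Real.sin (10*x + 10*κ)))
      ≤ ∫ x in (0:ℝ)..(π/2), π * (G (π/2 + (x + κ)) - G (x + κ)) := by
    apply intervalIntegral.integral_mono_on (by positivity)
    · have : Continuous (fun x : ℝ =>
          10*π/11 + (4/3)*Real.sin (2*x + 2*κ) + (4/105)*Real.sin (6*x + 6*κ)
          + (4/495)*Real.sin (10*x + 10*κ)) := by fun_prop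
      exact this.intervalIntegrable _ _
    · have : Continuous (fun x : ℝ => π * (G (π/2 + (x + κ)) - G (x + κ))) := by
        apply continuous_const.mul
        exact (hG.comp (by fun_prop)).sub (hG.comp (by fun_prop))
      exact this.intervalIntegrable _ _
    · intro x _
      exact hmono x
  rw [outer_int κ] at houter
  -- identify RHS with π * (double integral)
  have hid : (∫ x in (0:ℝ)..(π/2), π * (G (π/2 + (x + κ)) - G (x + κ)))
      = π * ∫ x in (0:ℝ)..(π/2), ∫ y in (0:ℝ)..(π/2), |Real.sin (x + y + κ)| := by
    rw [← intervalIntegral.integral_const_mul]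
    apply intervalIntegral.integral_congr
    intro x _
    dsimp only
    rw [hF x]
  rw [hid] at houter
  set T := ∫ x in (0:ℝ)..(π/2), ∫ y in (0:ℝ)..(π/2), |Real.sin (x + y + κ)| with hT
  have hc2 := Real.neg_one_le_cos (2*κ)
  have hc6 := Real.neg_one_le_cos (6*κ)
  have hc10 := Real.neg_one_le_cos (10*κ)
  have hlow : 5*π^2/11 - 4/3 - 4/315 - 4/2475 ≤ π * T := by linarith
  have hπ1 : 3.141592 < π := Real.pi_gt_d6
  have hπ2 : π < 3.141593 := Real.pi_lt_d6
  have hsq : π^2 < 9.86961 := by nlinarith [mul_lt_mul_of_pos_left hπ2 hπ]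
  have hsq' : (9.8696:ℝ) < π^2 := by nlinarith [mul_lt_mul_of_pos_left hπ1 hπ]
  have hcub : π^3 < 31.00632 := by nlinarith [mul_lt_mul_of_pos_left hsq hπ]
  have h3 : (2:ℝ)/5*π^2*π ≤ 4*T*π := by nlinarith [hlow, hsq', hcub]
  have hgoal : (2:ℝ)/5 * π^2 ≤ 4 * T := le_of_mul_le_mul_right h3 hπ
  rw [div_mul_eq_mul_div, le_div_iff₀ (by positivity : (0:ℝ) < π^2)]
  linarith
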